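/- Let κ be an infinite cardinal and let 𝒞 be a non-trivial cutset in 𝒫(κ). Then for every subset A of κ, either there is an ordinal α < κ for which A − α ∈ 𝒞, or there is an ordinal α < κ for which A ∪ α ∈ 𝒞. -/

import Mathlib

/-- Let κ be an infinite cardinal and let 𝒞 be a non-trivial cutset in
𝒫(κ) (κ identified with the set {β : Ordinal | β < κ}). Then for every subset A of κ,
either there is an ordinal α < κ with A − α ∈ 𝒞 or there is an ordinal α < κ with
A ∪ α ∈ 𝒞, where A − α = A \ {β : β < α} and A ∪ α = A ∪ {β : β < α}. -/
theorem cutset_mem_diff_or_union (κ : Cardinal.{u}) (hκ : Cardinal.aleph0 ≤ κ)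
    (C : Set (Set {β : Ordinal.{u} // β < κ.ord}))
    (hcut : ∀ M : Set (Set {β : Ordinal.{u} // β < κ.ord}),
      IsMaxChain (· ⊆ ·) M → (C ∩ M).Nonempty)
    (huniv : Set.univ ∉ C) (hempty : ∅ ∉ C)
    (A : Set {β : Ordinal.{u} // β < κ.ord}) :
    (∃ α < κ.ord, A \ {x | x.1 < α} ∈ C) ∨ (∃ α < κ.ord, A ∪ {x | x.1 < α} ∈ C) := by
  classical
  set M : Set (Set {β : Ordinal.{u} // β < κ.ord}) :=
    {S | ∃ α : Ordinal.{u}, S = A \ {x | x.1 < α}} ∪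
    {S | ∃ α : Ordinal.{u}, S = A ∪ {x | x.1 < α}} with hMdef
  have hAinM : A ∈ M := by
    left
    exact ⟨0, by ext x; simp⟩
  have hchain : IsChain (· ⊆ ·) M := by
    rintro S (⟨α, rfl⟩ | ⟨α, rfl⟩) T (⟨β, rfl⟩ | ⟨β, rfl⟩) hne
    · rcases le_total α β with h | h
      · right
        intro x hx
        exact ⟨hx.1, fun hc => hx.2 (lt_of_lt_of_le hc h)⟩
      · left
        intro x hx
        exact ⟨hx.1, fun hc => hx.2 (lt_of_lt_of_le hc h)⟩
    · left
      intro x hx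
      exact Or.inl hx.1
    · right
      intro x hx
      exact Or.inl hx.1
    · rcases le_total α β with h | h
      · left
        rintro x (hx | hx)
        · exact Or.inl hx
        · exact Or.inr (lt_of_lt_of_le hx h)
      · right
        rintro x (hx | hx)
        · exact Or.inl hx
        · exact Or.inr (lt_of_lt_of_le hx h)
  have hmax : IsMaxChain (· ⊆ ·) M := by
    refine ⟨hchain, fun t ht hsub => ?_⟩
    refine Set.Subset.antisymm hsub fun B hB => ?_
    -- B is comparable with every member of M
    have hcomp : ∀ m ∈ M, B ⊆ m ∨ m ⊆ B := by
      intro m hm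
      by_cases hBm : B = m
      · exact Or.inl (hBm ▸ subset_rfl)
      · exact ht hB (hsub hm) hBm
    rcases hcomp A hAinM with hBA | hAB
    · -- B ⊆ A : show B = A \ {x | x.1 < α*}
      left
      set S : Set Ordinal.{u} := {α | A \ {x | x.1 < α} ⊆ B} with hS
      have hSne : S.Nonempty := by
        refine ⟨κ.ord, fun x hx => absurd x.2 ?_⟩
        simpa using hx.2
      set α₀ := Ordinal.lt_wf.min S hSne with hα₀
      have hmem : A \ {x | x.1 < α₀} ⊆ B := Ordinal.lt_wf.min_mem S hSne
      -- key claim: y ∈ B, x ∈ A, x ∉ B → x.1 ≤ y.1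
      have key : ∀ y ∈ B, ∀ x ∈ A, x ∉ B → x.1 ≤ y.1 := by
        intro y hy x hxA hxB
        by_contra hlt
        push_neg at hlt
        rcases hcomp (A \ {x | x.1 < y.1 + 1}) (Or.inl ⟨y.1 + 1, rfl⟩) with h | h
        · exact absurd (h hy).2 (by simp [Order.lt_add_one_iff])
        · exact hxB (h ⟨hxA, by
            simp only [Set.mem_setOf_eq, Ordinal.add_one_eq_succ, Order.lt_succ_iff, not_le]
            exact hlt⟩)
      refine ⟨α₀, ?_⟩
      refine Set.Subset.antisymm (fun y hy => ⟨hBA hy, fun hylt => ?_⟩) hmem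
      -- y ∈ B with y.1 < α₀ : contradiction
      have hnotS : y.1 ∉ S := fun h => Ordinal.lt_wf.not_lt_min S h hylt
      rw [hS, Set.mem_setOf_eq] at hnotS
      rcases Set.not_subset.mp hnotS with ⟨x, hx, hxB⟩
      have h1 : y.1 ≤ x.1 := le_of_not_gt hx.2
      have h2 : x.1 ≤ y.1 := key y hy x hx.1 hxB
      have : x = y := Subtype.ext (le_antisymm h2 h1)
      exact hxB (this ▸ hy)
    · -- A ⊆ B : show B = A ∪ {x | x.1 < α*}
      right
      set S : Set Ordinal.{u} := {α | B ⊆ A ∪ {x | x.1 < α}} with hS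
      have hSne : S.Nonempty := ⟨κ.ord, fun x _ => Or.inr x.2⟩
      set α₀ := Ordinal.lt_wf.min S hSne with hα₀
      have hmem : B ⊆ A ∪ {x | x.1 < α₀} := Ordinal.lt_wf.min_mem S hSne
      have key : ∀ y ∈ B, y ∉ A → ∀ x, x ∉ B → y.1 ≤ x.1 := by
        intro y hy hyA x hxB
        by_contra hlt
        push_neg at hlt
        rcases hcomp (A ∪ {z | z.1 < x.1 + 1}) (Or.inr ⟨x.1 + 1, rfl⟩) with h | h
        · rcases h hy with h' | h'
          · exact hyA h'
          · simp only [Set.mem_setOf_eq, Ordinal.add_one_eq_succ, Order.lt_succ_iff] at h'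
            exact absurd hlt (not_lt.mpr h')
        · exact hxB (h (Or.inr (by
            simp [Order.lt_add_one_iff])))
      refine ⟨α₀, ?_⟩
      refine Set.Subset.antisymm hmem ?_
      rintro x (hx | hx)
      · exact hAB hx
      · by_contra hxB
        have hnotS : x.1 ∉ S := fun h => Ordinal.lt_wf.not_lt_min S h hx
        rw [hS, Set.mem_setOf_eq] at hnotS
        rcases Set.not_subset.mp hnotS with ⟨y, hy, hy'⟩
        simp only [Set.mem_union, Set.mem_setOf_eq, not_or, not_lt] at hy'
        have h1 : x.1 ≤ y.1 := hy'.2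
        have h2 : y.1 ≤ x.1 := key y hy hy'.1 x hxB
        have : y = x := Subtype.ext (le_antisymm h2 h1)
        exact hxB (this ▸ hy)
  rcases hcut M hmax with ⟨c, hcC, hcM⟩
  rcases hcM with ⟨α, rfl⟩ | ⟨α, rfl⟩
  · left
    refine ⟨α, ?_, hcC⟩
    by_contra hge
    push_neg at hge
    have : A \ {x | x.1 < α} = ∅ := by
      ext x
      simp only [Set.mem_diff, Set.mem_setOf_eq, Set.mem_empty_iff_false, iff_false]
      exact fun h => h.2 (lt_of_lt_of_le x.2 hge)
    exact hempty (this ▸ hcC)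
  · right
    refine ⟨α, ?_, hcC⟩
    by_contra hge
    push_neg at hge
    have : A ∪ {x | x.1 < α} = Set.univ := by
      ext x
      simp only [Set.mem_union, Set.mem_setOf_eq, Set.mem_univ, iff_true]
      exact Or.inr (lt_of_lt_of_le x.2 hge)
    exact huniv (this ▸ hcC)
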